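/- For a gradient-flow trajectory of a two-layer ReLU network on an orthogonally separable dataset, starting from a balanced and live initialisation, with either the exponential or the logistic loss: for each j ∈ [k], either sup_{t ≥ 0} |a_j(t)| < ∞, or |a_j(t)| → ∞ as t → ∞. -/

import Mathlib

open MeasureTheory Filter Finset

/-- Euclidean inner product of real vectors. -/
noncomputable def dotp {m : ℕ} (u v : Fin m → ℝ) : ℝ := ∑ i, u i * v i

/-- Euclidean norm of a real vector. -/
noncomputable def norm2 {m : ℕ} (v : Fin m → ℝ) : ℝ := Real.sqrt (∑ i, v i ^ 2)

/-- The ReLU function `ψ(u) = max{u, 0}`. -/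
noncomputable def relu (u : ℝ) : ℝ := max u 0

/-- The two-layer ReLU network `N_θ(z) = Σ_j a_j ψ(w_jᵀ z)`. -/
noncomputable def net {d k : ℕ} (w : Fin k → Fin d → ℝ) (a : Fin k → ℝ)
    (z : Fin d → ℝ) : ℝ :=
  ∑ j, a j * relu (dotp (w j) z)

lemma sq_integral_core (g : ℝ → ℝ) (hg : ∀ t : ℝ, IntervalIntegrable g volume 0 t)
    {t : ℝ} (ht : 0 ≤ t) :
    (∫ s in (0:ℝ)..t, g s) ^ 2
      = 2 * ∫ s in (0:ℝ)..t, (∫ r in (0:ℝ)..s, g r) * g s := by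
  classical
  set μ := volume.restrict (Set.Ioc (0:ℝ) t) with hμ
  have hgi : Integrable g μ := by
    have := (hg t)
    rw [intervalIntegrable_iff_integrableOn_Ioc_of_le ht] at this
    exact this
  set A := ∫ s in (0:ℝ)..t, g s with hA
  have hAeq : A = ∫ x, g x ∂μ := by rw [hA, intervalIntegral.integral_of_le ht]
  set G : ℝ → ℝ := fun s => ∫ r in (0:ℝ)..s, g r with hG
  have hGcont : Continuous G :=
    intervalIntegral.continuous_primitive (fun a b => ((hg a).symm.trans (hg b))) 0
  set F : ℝ × ℝ → ℝ := fun p => Set.indicator {q : ℝ × ℝ | q.2 ≤ q.1} (fun q => g q.2 * g q.1) p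
    with hF
  have hmeasS : MeasurableSet {q : ℝ × ℝ | q.2 ≤ q.1} :=
    measurableSet_le measurable_snd measurable_fst
  have hFint : Integrable F (μ.prod μ) := by
    have hprod : Integrable (fun q : ℝ × ℝ => g q.1 * g q.2) (μ.prod μ) := hgi.mul_prod hgi
    have hm : AEStronglyMeasurable (fun q : ℝ × ℝ => g q.2 * g q.1) (μ.prod μ) :=
      (hgi.aestronglyMeasurable.comp_snd.mul hgi.aestronglyMeasurable.comp_fst)
    refine Integrable.mono' hprod.abs (hm.indicator hmeasS) ?_
    refine Filter.Eventually.of_forall fun p => ?_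
    simp only [hF, Real.norm_eq_abs]
    by_cases h : p ∈ {q : ℝ × ℝ | q.2 ≤ q.1}
    · rw [Set.indicator_of_mem h]
      rw [abs_mul, abs_mul, mul_comm]
    · rw [Set.indicator_of_notMem h]
      simp [abs_nonneg]
      positivity
  -- identify T with the double integral of F
  set T := ∫ s in (0:ℝ)..t, G s * g s with hT
  have hGgInt : Integrable (fun s => G s * g s) μ := by
    have : IntervalIntegrable (fun s => G s * g s) volume 0 t :=
      (hg t).continuousOn_mul hGcont.continuousOn
    rw [intervalIntegrable_iff_integrableOn_Ioc_of_le ht] at this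
    exact this
  have hTeq : T = ∫ s, ∫ x, F (s, x) ∂μ ∂μ := by
    rw [hT, intervalIntegral.integral_of_le ht]
    refine integral_congr_ae ((ae_restrict_iff' measurableSet_Ioc).mpr
      (Filter.Eventually.of_forall fun s hs => ?_))
    show G s * g s = ∫ x, F (s, x) ∂μ
    have h1 : (fun x => F (s, x)) = fun x => (Set.Iic s).indicator g x * g s := by
      funext x
      simp only [hF]
      by_cases hx : x ≤ s
      · rw [Set.indicator_of_mem (by exact hx : (s,x) ∈ {q : ℝ×ℝ | q.2 ≤ q.1}),
          Set.indicator_of_mem (by exact hx)]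
      · rw [Set.indicator_of_notMem (by exact hx : (s,x) ∉ {q : ℝ×ℝ | q.2 ≤ q.1}),
          Set.indicator_of_notMem (by exact hx)]
        ring
    rw [h1, integral_mul_const, integral_indicator measurableSet_Iic]
    congr 1
    have : μ.restrict (Set.Iic s) = volume.restrict (Set.Ioc 0 s) := by
      rw [hμ, Measure.restrict_restrict measurableSet_Iic]
      congr 1
      ext r
      simp only [Set.mem_inter_iff, Set.mem_Iic, Set.mem_Ioc]
      constructor
      · rintro ⟨h1, h2, h3⟩; exact ⟨h2, h1⟩
      · rintro ⟨h1, h2⟩; exact ⟨h2, h1, h2.trans hs.2⟩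
    show (∫ r in (0:ℝ)..s, g r) = ∫ x in Set.Iic s, g x ∂μ
    rw [this, intervalIntegral.integral_of_le hs.1.le]
  have hswap : ∫ s, ∫ x, F (s, x) ∂μ ∂μ = ∫ x, ∫ s, F (s, x) ∂μ ∂μ :=
    integral_integral_swap (by exact hFint)
  have hinner : ∫ x, ∫ s, F (s, x) ∂μ ∂μ = ∫ x, g x * (A - G x) ∂μ := by
    refine integral_congr_ae ((ae_restrict_iff' measurableSet_Ioc).mpr
      (Filter.Eventually.of_forall fun x hx => ?_))
    show (∫ s, F (s, x) ∂μ) = g x * (A - G x)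
    have h1 : (fun s => F (s, x)) = fun s => (Set.Ici x).indicator (fun s => g x * g s) s := by
      funext s
      simp only [hF]
      by_cases hs : x ≤ s
      · rw [Set.indicator_of_mem (by exact hs : (s,x) ∈ {q : ℝ×ℝ | q.2 ≤ q.1}),
          Set.indicator_of_mem (by exact hs : s ∈ Set.Ici x)]
      · rw [Set.indicator_of_notMem (by exact hs : (s,x) ∉ {q : ℝ×ℝ | q.2 ≤ q.1}),
          Set.indicator_of_notMem (by exact hs : s ∉ Set.Ici x)]
    rw [h1, integral_indicator measurableSet_Ici]
    have hres : μ.restrict (Set.Ici x) = volume.restrict (Set.Icc x t) := by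
      rw [hμ, Measure.restrict_restrict measurableSet_Ici]
      congr 1
      ext r
      simp only [Set.mem_inter_iff, Set.mem_Ici, Set.mem_Ioc, Set.mem_Icc]
      constructor
      · rintro ⟨h1, h2, h3⟩; exact ⟨h1, h3⟩
      · rintro ⟨h1, h2⟩; exact ⟨h1, hx.1.trans_le h1, h2⟩
    rw [hres, MeasureTheory.integral_Icc_eq_integral_Ioc]
    have : ∫ s in Set.Ioc x t, g x * g s = g x * ∫ s in Set.Ioc x t, g s := integral_const_mul _ _
    rw [this]
    congr 1
    have hadj : (∫ r in (0:ℝ)..x, g r) + ∫ r in x..t, g r = ∫ r in (0:ℝ)..t, g r :=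
      intervalIntegral.integral_add_adjacent_intervals (hg x) ((hg x).symm.trans (hg t))
    have : ∫ s in Set.Ioc x t, g s = ∫ r in x..t, g r :=
      (intervalIntegral.integral_of_le hx.2).symm
    rw [this, hG, hA]
    linarith
  have hsplit : ∫ x, g x * (A - G x) ∂μ = A * A - T := by
    have h1 : ∫ x, g x * (A - G x) ∂μ = ∫ x, (g x * A - G x * g x) ∂μ := by
      congr 1; funext x; ring
    rw [h1, integral_sub (hgi.mul_const A) (by exact hGgInt)]
    have hT2 : T = ∫ x, G x * g x ∂μ := by rw [hT, intervalIntegral.integral_of_le ht]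
    rw [integral_mul_const]
    rw [← hAeq, ← hT2]
  have h2 : T = A * A - T := hTeq.trans (hswap.trans (hinner.trans hsplit))
  show A ^ 2 = 2 * T
  have hsq : A ^ 2 = A * A := sq A
  linarith


lemma primitive_sq (g f : ℝ → ℝ) (C : ℝ) (hg : ∀ t : ℝ, IntervalIntegrable g volume 0 t)
    (hf : ∀ s : ℝ, f s = C + ∫ r in (0:ℝ)..s, g r) {t : ℝ} (ht : 0 ≤ t) :
    f t ^ 2 = C ^ 2 + ∫ s in (0:ℝ)..t, 2 * f s * g s := by
  have hGcont : Continuous fun s => ∫ r in (0:ℝ)..s, g r :=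
    intervalIntegral.continuous_primitive (fun a b => ((hg a).symm.trans (hg b))) 0
  have hfc : Continuous f := by
    have : f = fun s => C + ∫ r in (0:ℝ)..s, g r := funext hf
    rw [this]; exact continuous_const.add hGcont
  have h1 : (fun s => 2 * f s * g s) = fun s => (2 * C) * g s + 2 * ((∫ r in (0:ℝ)..s, g r) * g s) := by
    funext s; rw [hf s]; ring
  have hint1 : IntervalIntegrable (fun s => (2*C) * g s) volume 0 t := (hg t).const_mul _
  have hint2 : IntervalIntegrable (fun s => 2 * ((∫ r in (0:ℝ)..s, g r) * g s)) volume 0 t :=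
    (((hg t).continuousOn_mul hGcont.continuousOn)).const_mul 2
  rw [h1, intervalIntegral.integral_add hint1 hint2, intervalIntegral.integral_const_mul,
    intervalIntegral.integral_const_mul, ← sq_integral_core g hg ht, hf t]
  ring


lemma norm2_nonneg' {m : ℕ} (v : Fin m → ℝ) : 0 ≤ norm2 v := Real.sqrt_nonneg _

lemma norm2_sq' {m : ℕ} (v : Fin m → ℝ) : norm2 v ^ 2 = ∑ i, v i ^ 2 :=
  Real.sq_sqrt (Finset.sum_nonneg fun i _ => sq_nonneg _)

lemma dotp_self' {m : ℕ} (v : Fin m → ℝ) : dotp v v = ∑ i, v i ^ 2 := by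
  unfold dotp; exact Finset.sum_congr rfl fun i _ => by ring

lemma abs_dotp_le' {m : ℕ} (u v : Fin m → ℝ) : |dotp u v| ≤ norm2 u * norm2 v := by
  have hcs := Finset.sum_mul_sq_le_sq_mul_sq Finset.univ u v
  have h1 : |dotp u v| = Real.sqrt (dotp u v ^ 2) := (Real.sqrt_sq_eq_abs _).symm
  rw [h1]
  have h2 : norm2 u * norm2 v = Real.sqrt ((∑ i, u i ^ 2) * ∑ i, v i ^ 2) := by
    rw [Real.sqrt_mul (Finset.sum_nonneg fun i _ => sq_nonneg _)]; rfl
  rw [h2]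
  exact Real.sqrt_le_sqrt hcs

lemma deriv_loss_exists (ℓ : ℝ → ℝ)
    (hℓ : (ℓ = fun u => Real.exp (-u)) ∨ (ℓ = fun u => Real.log (1 + Real.exp (-u)))) :
    Continuous (deriv ℓ) ∧ ∀ u, deriv ℓ u ≤ 0 := by
  rcases hℓ with h | h
  · have hd : deriv ℓ = fun u => -Real.exp (-u) := by
      funext u
      have : HasDerivAt ℓ (-Real.exp (-u)) u := by
        rw [h]
        have h1 : HasDerivAt (fun v : ℝ => -v) (-1 : ℝ) u := (hasDerivAt_id u).neg
        have := (Real.hasDerivAt_exp (-u)).comp u h1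
        exact this.congr_deriv (by ring)
      exact this.deriv
    rw [hd]
    exact ⟨(Real.continuous_exp.comp continuous_neg).neg, fun u => neg_nonpos.mpr (Real.exp_pos _).le⟩
  · have hd : deriv ℓ = fun u => -Real.exp (-u) / (1 + Real.exp (-u)) := by
      funext u
      have hpos : (0:ℝ) < 1 + Real.exp (-u) := by positivity
      have : HasDerivAt ℓ (-Real.exp (-u) / (1 + Real.exp (-u))) u := by
        rw [h]
        have h1 : HasDerivAt (fun v : ℝ => -v) (-1 : ℝ) u := (hasDerivAt_id u).neg
        have h2 : HasDerivAt (fun v : ℝ => Real.exp (-v)) (Real.exp (-u) * (-1)) u :=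
          (Real.hasDerivAt_exp (-u)).comp u h1
        have h3 : HasDerivAt (fun v : ℝ => 1 + Real.exp (-v)) (Real.exp (-u) * (-1)) u := by
          have := (hasDerivAt_const u (1:ℝ)).add h2
          exact this.congr_deriv (by ring)
        have := h3.log hpos.ne'
        convert this using 1; ring
      exact this.deriv
    rw [hd]
    constructor
    · apply Continuous.div
      · exact (Real.continuous_exp.comp continuous_neg).neg
      · exact continuous_const.add (Real.continuous_exp.comp continuous_neg)
      · intro u; positivity
    · intro u
      apply div_nonpos_of_nonpos_of_nonneg
      · exact neg_nonpos.mpr (Real.exp_pos _).le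
      · positivity


/-- for each `j`, either `|a_j(t)|` is bounded on `[0, ∞)` or `|a_j(t)| → ∞`. -/
theorem gradient_flow_bounded_or_to_infinity
    (d n k : ℕ) (x : Fin n → Fin d → ℝ) (y : Fin n → ℝ)
    (hy : ∀ i, y i = 1 ∨ y i = -1)
    (hsep1 : ∀ i i', y i = y i' → 0 < dotp (x i) (x i'))
    (hsep2 : ∀ i i', y i ≠ y i' → dotp (x i) (x i') ≤ 0)
    (ℓ : ℝ → ℝ)
    (hℓ : (ℓ = fun u => Real.exp (-u)) ∨ (ℓ = fun u => Real.log (1 + Real.exp (-u))))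
    (w : ℝ → Fin k → Fin d → ℝ) (a : ℝ → Fin k → ℝ)
    (w' : ℝ → Fin k → Fin d → ℝ) (a' : ℝ → Fin k → ℝ)
    (hwInt : ∀ (j : Fin k) (i : Fin d) (t : ℝ),
      IntervalIntegrable (fun s => w' s j i) volume 0 t)
    (haInt : ∀ (j : Fin k) (t : ℝ), IntervalIntegrable (fun s => a' s j) volume 0 t)
    (hwFTC : ∀ (t : ℝ) (j : Fin k) (i : Fin d),
      w t j i = w 0 j i + ∫ s in (0:ℝ)..t, w' s j i)
    (haFTC : ∀ (t : ℝ) (j : Fin k), a t j = a 0 j + ∫ s in (0:ℝ)..t, a' s j)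
    (hODE : ∀ᵐ t ∂(volume.restrict (Set.Ici (0:ℝ))),
      ∃ σ : Fin n → Fin k → ℝ,
        (∀ i j, 0 ≤ σ i j ∧ σ i j ≤ 1) ∧
        (∀ i j, dotp (w t j) (x i) < 0 → σ i j = 0) ∧
        (∀ i j, 0 < dotp (w t j) (x i) → σ i j = 1) ∧
        (∀ j ic, w' t j ic =
          -∑ i, deriv ℓ (y i * net (w t) (a t) (x i)) * y i * a t j * σ i j * x i ic) ∧
        (∀ j, a' t j =
          -∑ i, deriv ℓ (y i * net (w t) (a t) (x i)) * y i * relu (dotp (w t j) (x i))))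
    (hbal : ∀ j, |a 0 j| = norm2 (w 0 j) ∧ a 0 j ≠ 0)
    (hlive : ∀ s : ℝ, s = 1 ∨ s = -1 →
      ∃ i j, y i = s ∧ 0 < y i * a 0 j * relu (dotp (w 0 j) (x i))) :
    ∀ j : Fin k,
      (∃ M : ℝ, ∀ t : ℝ, 0 ≤ t → |a t j| ≤ M) ∨
        Tendsto (fun t => |a t j|) atTop atTop := by
  classical
  intro j
  obtain ⟨i0, j0, -, -⟩ := hlive 1 (Or.inl rfl)
  obtain ⟨hDc, hDle⟩ := deriv_loss_exists ℓ hℓ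
  -- continuity of trajectories
  have hwc : ∀ (j : Fin k) (ic : Fin d), Continuous fun t => w t j ic := by
    intro j ic
    have h1 : (fun t => w t j ic) = fun t => w 0 j ic + ∫ s in (0:ℝ)..t, w' s j ic :=
      funext fun t => hwFTC t j ic
    rw [h1]
    exact continuous_const.add
      (intervalIntegral.continuous_primitive (fun u v => ((hwInt j ic u).symm.trans (hwInt j ic v))) 0)
  have hac : ∀ (j : Fin k), Continuous fun t => a t j := by
    intro j
    have h1 : (fun t => a t j) = fun t => a 0 j + ∫ s in (0:ℝ)..t, a' s j :=
      funext fun t => haFTC t j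
    rw [h1]
    exact continuous_const.add
      (intervalIntegral.continuous_primitive (fun u v => ((haInt j u).symm.trans (haInt j v))) 0)
  have hnetc : ∀ i : Fin n, Continuous fun t => net (w t) (a t) (x i) := by
    intro i
    unfold net relu dotp
    exact continuous_finset_sum _ fun j' _ => (hac j').mul
      ((continuous_finset_sum _ fun ic _ => (hwc j' ic).mul continuous_const).max continuous_const)
  have hDic : ∀ i : Fin n, Continuous fun t => deriv ℓ (y i * net (w t) (a t) (x i)) :=
    fun i => hDc.comp (continuous_const.mul (hnetc i))
  -- data quantities
  have hdotpos : ∀ i, 0 < dotp (x i) (x i) := fun i => hsep1 i i rfl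
  set X : Fin n → ℝ := fun i => norm2 (x i) with hX
  have hXsq : ∀ i, X i ^ 2 = dotp (x i) (x i) := by
    intro i; rw [hX, norm2_sq', dotp_self']
  have hXpos : ∀ i, 0 < X i := by
    intro i
    have h1 := hXsq i
    have h2 := hdotpos i
    have h3 : 0 ≤ X i := norm2_nonneg' _
    nlinarith
  set c : ℝ := Finset.univ.inf' ⟨i0, Finset.mem_univ i0⟩ X with hc
  have hcpos : 0 < c := by
    rw [hc]; refine (Finset.lt_inf'_iff _).mpr ?_
    exact fun i _ => hXpos i
  have hcle : ∀ i, c ≤ X i := fun i => Finset.inf'_le _ (Finset.mem_univ i)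
  set z : Fin d → ℝ := fun ic => ∑ i, y i * x i ic with hz
  have hyy : ∀ i, y i * y i = 1 := by
    intro i; rcases hy i with h | h <;> rw [h] <;> norm_num
  have hyabs : ∀ i, |y i| = 1 := by
    intro i; rcases hy i with h | h <;> rw [h] <;> norm_num
  have hdxz : ∀ i, dotp (x i) z = ∑ i', y i' * dotp (x i) (x i') := by
    intro i
    unfold dotp
    rw [hz]
    simp only [Finset.mul_sum]
    rw [Finset.sum_comm]
    exact Finset.sum_congr rfl fun i' _ => Finset.sum_congr rfl fun ic _ => by ring
  set m : Fin n → ℝ := fun i => y i * dotp (x i) z with hm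
  have hmge : ∀ i, dotp (x i) (x i) ≤ m i := by
    intro i
    have h1 : m i = ∑ i', (y i * y i') * dotp (x i) (x i') := by
      rw [hm]
      simp only
      rw [hdxz i, Finset.mul_sum]
      exact Finset.sum_congr rfl fun i' _ => by ring
    rw [h1, ← Finset.add_sum_erase _ _ (Finset.mem_univ i), hyy i, one_mul]
    have h2 : 0 ≤ ∑ i' ∈ Finset.univ.erase i, (y i * y i') * dotp (x i) (x i') := by
      refine Finset.sum_nonneg fun i' _ => ?_
      by_cases hyi : y i = y i'
      · have := hsep1 i i' hyi
        have hy1 : y i * y i' = 1 := by rw [← hyi, hyy i]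
        rw [hy1, one_mul]; exact this.le
      · have := hsep2 i i' hyi
        have hy1 : y i * y i' = -1 := by
          rcases hy i with h1 | h1 <;> rcases hy i' with h2 | h2
          · exact absurd (h1.trans h2.symm) hyi
          · rw [h1, h2]; norm_num
          · rw [h1, h2]; norm_num
          · exact absurd (h1.trans h2.symm) hyi
        rw [hy1]; nlinarith
    linarith
  have hmX : ∀ i, c * X i ≤ m i := by
    intro i
    have h1 : c * X i ≤ X i ^ 2 := by nlinarith [hcle i, hXpos i]
    calc c * X i ≤ X i ^ 2 := h1
      _ = dotp (x i) (x i) := hXsq i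
      _ ≤ m i := hmge i
  -- balance
  have hAA'int : ∀ t : ℝ, IntervalIntegrable (fun r => 2 * a r j * a' r j) volume 0 t := by
    intro t
    exact (haInt j t).continuousOn_mul ((continuous_const.mul (hac j)).continuousOn)
  have hww'int : ∀ (ic : Fin d) (t : ℝ),
      IntervalIntegrable (fun r => 2 * w r j ic * w' r j ic) volume 0 t := by
    intro ic t
    exact (hwInt j ic t).continuousOn_mul ((continuous_const.mul (hwc j ic)).continuousOn)
  have hODE' := (ae_restrict_iff' measurableSet_Ici).mp hODE
  have hzero : ∀ᵐ r ∂(volume : Measure ℝ), r ∈ Set.Ici (0:ℝ) →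
      2 * a r j * a' r j = ∑ ic, 2 * w r j ic * w' r j ic := by
    filter_upwards [hODE'] with r hσ hr
    obtain ⟨σ, hσ01, hσ0, hσ1, hw', ha'⟩ := hσ hr
    have hkey : ∀ i, σ i j * dotp (w r j) (x i) = relu (dotp (w r j) (x i)) := by
      intro i
      rcases lt_trichotomy (dotp (w r j) (x i)) 0 with h | h | h
      · rw [hσ0 i j h, relu, max_eq_right h.le, zero_mul]
      · rw [h, relu]; simp
      · rw [hσ1 i j h, relu, max_eq_left h.le, one_mul]
    have hsum : ∑ ic, 2 * w r j ic * w' r j ic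
        = ∑ i, (-2 * (deriv ℓ (y i * net (w r) (a r) (x i)) * y i) * a r j)
            * (σ i j * dotp (w r j) (x i)) := by
      have e1 : ∀ ic, 2 * w r j ic * w' r j ic
          = ∑ i, (-2 * (deriv ℓ (y i * net (w r) (a r) (x i)) * y i) * a r j)
              * (σ i j * (w r j ic * x i ic)) := by
        intro ic
        rw [hw' j ic, mul_neg, Finset.mul_sum, ← Finset.sum_neg_distrib]
        exact Finset.sum_congr rfl fun i _ => by ring
      rw [Finset.sum_congr rfl fun ic _ => e1 ic, Finset.sum_comm]
      refine Finset.sum_congr rfl fun i _ => ?_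
      rw [dotp, Finset.mul_sum, Finset.mul_sum]
    rw [hsum, ha' j, mul_neg, Finset.mul_sum, ← Finset.sum_neg_distrib]
    exact Finset.sum_congr rfl fun i _ => by rw [hkey i]; ring
  have hbalance : ∀ t : ℝ, 0 ≤ t → a t j ^ 2 = ∑ ic, w t j ic ^ 2 := by
    intro t ht
    have h1 := primitive_sq (fun s => a' s j) (fun s => a s j) (a 0 j) (haInt j)
      (fun s => haFTC s j) ht
    have h2 : ∀ ic : Fin d, w t j ic ^ 2
        = w 0 j ic ^ 2 + ∫ s in (0:ℝ)..t, 2 * w s j ic * w' s j ic :=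
      fun ic => primitive_sq (fun s => w' s j ic) (fun s => w s j ic) (w 0 j ic)
        (hwInt j ic) (fun s => hwFTC s j ic) ht
    have h3 : ∑ ic, w t j ic ^ 2
        = (∑ ic, w 0 j ic ^ 2) + ∫ s in (0:ℝ)..t, ∑ ic, 2 * w s j ic * w' s j ic := by
      rw [Finset.sum_congr rfl fun ic _ => h2 ic, Finset.sum_add_distrib]
      congr 1
      exact (intervalIntegral.integral_finset_sum fun ic _ => hww'int ic t).symm
    have h4 : (∫ s in (0:ℝ)..t, 2 * a s j * a' s j)
        = ∫ s in (0:ℝ)..t, ∑ ic, 2 * w s j ic * w' s j ic := by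
      refine intervalIntegral.integral_congr_ae ?_
      filter_upwards [hzero] with r h hmem
      have hr : r ∈ Set.Ici (0:ℝ) := by
        rw [Set.uIoc_of_le ht] at hmem
        exact le_of_lt hmem.1
      exact h hr
    have h5 : a 0 j ^ 2 = ∑ ic, w 0 j ic ^ 2 := by
      have hb := (hbal j).1
      have := congrArg (fun r => r ^ 2) hb
      simpa [sq_abs, norm2_sq'] using this
    rw [h1, h4, h5, ← h3]
  have hnormw : ∀ t : ℝ, 0 ≤ t → norm2 (w t j) = |a t j| := by
    intro t ht
    rw [norm2, ← hbalance t ht, Real.sqrt_sq_eq_abs]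
  -- the |a| bound on relu terms (uses balance)
  have hrelu_le : ∀ (t : ℝ), 0 ≤ t → ∀ i, relu (dotp (w t j) (x i)) ≤ X i * |a t j| := by
    intro t ht i
    rcases le_or_gt (dotp (w t j) (x i)) 0 with h | h
    · rw [relu, max_eq_right h]
      exact mul_nonneg (hXpos i).le (abs_nonneg _)
    · rw [relu, max_eq_left h.le]
      calc dotp (w t j) (x i) ≤ |dotp (w t j) (x i)| := le_abs_self _
        _ ≤ norm2 (w t j) * norm2 (x i) := abs_dotp_le' _ _
        _ = X i * |a t j| := by rw [hnormw t ht, hX, mul_comm]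
  -- non-vanishing of a
  have hane : ∀ t : ℝ, 0 ≤ t → a t j ≠ 0 := by
    intro t1 ht1 h0
    have ha0 : a 0 j ≠ 0 := (hbal j).2
    have ht1pos : 0 < t1 := by
      rcases ht1.lt_or_eq with h | h
      · exact h
      · exact absurd (h ▸ h0) ha0
    set f : ℝ → ℝ := fun t => a t j ^ 2 with hfdef
    have hfc : Continuous f := (hac j).pow 2
    have hfnn : ∀ s, 0 ≤ f s := fun s => sq_nonneg _
    have hf0 : 0 < f 0 := lt_of_le_of_ne (sq_nonneg _) (Ne.symm (pow_ne_zero 2 ha0))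
    have hft1 : f t1 = 0 := by show a t1 j ^ 2 = 0; rw [h0]; ring
    set K : ℝ → ℝ := fun r => 2 * ∑ i, (-(deriv ℓ (y i * net (w r) (a r) (x i)))) * X i with hK
    have hKc : Continuous K := continuous_const.mul
      (continuous_finset_sum _ fun i _ => ((hDic i).neg.mul continuous_const))
    obtain ⟨M0, hM0⟩ :=
      (isCompact_Icc (a := (0:ℝ)) (b := t1)).exists_bound_of_continuousOn hKc.continuousOn
    set M : ℝ := max M0 1 with hM
    have hMpos : 0 < M := lt_of_lt_of_le zero_lt_one (le_max_right _ _)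
    have hKM : ∀ r ∈ Set.Icc (0:ℝ) t1, K r ≤ M := fun r hr =>
      le_trans (le_trans (le_abs_self _) (hM0 r hr)) (le_max_left _ _)
    have hrnn : ∀ v : ℝ, 0 ≤ relu v := fun v => le_max_right v 0
    have habs : ∀ᵐ r ∂(volume : Measure ℝ), r ∈ Set.Ici (0:ℝ) →
        |2 * a r j * a' r j| ≤ K r * f r := by
      filter_upwards [hODE'] with r hσ hr
      obtain ⟨σ, hσ01, hσ0, hσ1, hw', ha'⟩ := hσ hr
      have h1 : |a' r j| ≤ ∑ i, (-(deriv ℓ (y i * net (w r) (a r) (x i)))) * (X i * |a r j|) := by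
        rw [ha' j, abs_neg]
        refine (Finset.abs_sum_le_sum_abs _ _).trans (Finset.sum_le_sum fun i _ => ?_)
        rw [abs_mul, abs_mul, hyabs i, mul_one, abs_of_nonpos (hDle _),
          abs_of_nonneg (hrnn _)]
        exact mul_le_mul_of_nonneg_left (hrelu_le r hr i) (neg_nonneg.mpr (hDle _))
      have h2 : |2 * a r j * a' r j| = 2 * |a r j| * |a' r j| := by
        rw [abs_mul, abs_mul]
        norm_num
      rw [h2]
      have h3 : 2 * |a r j| * |a' r j|
          ≤ 2 * |a r j| * ∑ i, (-(deriv ℓ (y i * net (w r) (a r) (x i)))) * (X i * |a r j|) :=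
        mul_le_mul_of_nonneg_left h1 (by positivity)
      refine h3.trans (le_of_eq ?_)
      show _ = K r * f r
      have e1 : 2 * |a r j| * ∑ i, (-(deriv ℓ (y i * net (w r) (a r) (x i)))) * (X i * |a r j|)
          = (2 * ∑ i, (-(deriv ℓ (y i * net (w r) (a r) (x i)))) * X i) * |a r j| ^ 2 := by
        simp only [Finset.mul_sum, Finset.sum_mul]
        exact Finset.sum_congr rfl fun i _ => by ring
      rw [e1, sq_abs]
    have hfprim : ∀ s : ℝ, 0 ≤ s → f s = f 0 + ∫ r in (0:ℝ)..s, 2 * a r j * a' r j := by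
      intro s hs
      show a s j ^ 2 = a 0 j ^ 2 + _
      exact primitive_sq (fun r => a' r j) (fun r => a r j) (a 0 j) (haInt j)
        (fun r => haFTC r j) hs
    have hfsub : ∀ s : ℝ, 0 ≤ s → s ≤ t1 → f s ≤ M * ∫ r in s..t1, f r := by
      intro s hs hst
      have h2 : (∫ r in s..t1, 2 * a r j * a' r j) = f t1 - f s := by
        have e1 := hfprim s hs
        have e2 := hfprim t1 ht1
        have e3 := intervalIntegral.integral_interval_sub_left (hAA'int t1) (hAA'int s)
        linarith
      have h3 : f s ≤ ∫ r in s..t1, |2 * a r j * a' r j| := by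
        have e4 : f s = -(∫ r in s..t1, 2 * a r j * a' r j) := by rw [h2, hft1]; ring
        rw [e4]
        exact (neg_le_abs _).trans (intervalIntegral.abs_integral_le_integral_abs hst)
      have h4 : (∫ r in s..t1, |2 * a r j * a' r j|) ≤ ∫ r in s..t1, M * f r := by
        refine intervalIntegral.integral_mono_ae_restrict hst
          ((hAA'int s).symm.trans (hAA'int t1)).abs
          ((continuous_const.mul hfc).intervalIntegrable _ _) ?_
        refine (ae_restrict_iff' measurableSet_Icc).mpr ?_
        filter_upwards [habs] with r h hmem
        have hr0 : (0:ℝ) ≤ r := hs.trans hmem.1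
        refine (h hr0).trans ?_
        exact mul_le_mul_of_nonneg_right (hKM r ⟨hr0, hmem.2⟩) (hfnn r)
      calc f s ≤ ∫ r in s..t1, |2 * a r j * a' r j| := h3
        _ ≤ ∫ r in s..t1, M * f r := h4
        _ = M * ∫ r in s..t1, f r := intervalIntegral.integral_const_mul _ _
    set Ψ : ℝ → ℝ := fun s => ∫ r in s..t1, f r with hΨdef
    have hΨd : ∀ s : ℝ, HasDerivAt Ψ (-(f s)) s := by
      intro s
      have h1 : HasDerivAt (fun v => ∫ r in t1..v, f r) (f s) s :=
        intervalIntegral.integral_hasDerivAt_right (hfc.intervalIntegrable _ _)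
          (hfc.stronglyMeasurableAtFilter _ _) hfc.continuousAt
      have h2 : Ψ = fun v => -(∫ r in t1..v, f r) := by
        funext v
        exact intervalIntegral.integral_symm _ _
      rw [h2]
      exact h1.neg
    have hΨnn : ∀ s, s ≤ t1 → 0 ≤ Ψ s := fun s hs =>
      intervalIntegral.integral_nonneg hs (fun r _ => hfnn r)
    set η : ℝ → ℝ := fun s => Real.exp (M * s) * Ψ s with hηdef
    have hηd : ∀ s : ℝ, HasDerivAt η (M * Real.exp (M * s) * Ψ s - Real.exp (M * s) * f s) s := by
      intro s
      have hlin : HasDerivAt (fun v : ℝ => M * v) M s := by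
        simpa using (hasDerivAt_id s).const_mul M
      have hexp : HasDerivAt (fun v => Real.exp (M * v)) (Real.exp (M * s) * M) s :=
        (Real.hasDerivAt_exp (M * s)).comp s hlin
      have h5 := hexp.mul (hΨd s)
      exact h5.congr_deriv (by ring)
    have hηc : Continuous η :=
      continuous_iff_continuousAt.mpr fun s => (hηd s).differentiableAt.continuousAt
    have hmono : MonotoneOn η (Set.Icc 0 t1) := by
      refine monotoneOn_of_deriv_nonneg (convex_Icc _ _) hηc.continuousOn
        (fun s _ => (hηd s).differentiableAt.differentiableWithinAt) ?_
      intro s hs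
      rw [interior_Icc] at hs
      rw [(hηd s).deriv]
      have h5 := hfsub s hs.1.le hs.2.le
      have hE := Real.exp_pos (M * s)
      have h6 : f s ≤ M * Ψ s := h5
      nlinarith
    have hηt1 : η t1 = 0 := by
      show Real.exp (M * t1) * Ψ t1 = 0
      have : Ψ t1 = 0 := intervalIntegral.integral_same
      rw [this, mul_zero]
    have hη0 : η 0 ≤ 0 := by
      have h7 := hmono (Set.left_mem_Icc.mpr ht1pos.le) (Set.right_mem_Icc.mpr ht1pos.le) ht1pos.le
      rw [hηt1] at h7
      exact h7
    have hΨ0 : Ψ 0 ≤ 0 := by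
      have h8 : η 0 = Ψ 0 := by
        show Real.exp (M * 0) * Ψ 0 = Ψ 0
        rw [mul_zero, Real.exp_zero, one_mul]
      linarith
    have hΨpos : 0 < Ψ 0 := by
      refine intervalIntegral.integral_pos ht1pos hfc.continuousOn
        (fun r _ => hfnn r) ⟨0, Set.left_mem_Icc.mpr ht1pos.le, hf0⟩
    linarith
  -- fixed sign
  set s0 : ℝ := if 0 < a 0 j then 1 else -1 with hs0
  have hs0abs : |s0| = 1 := by
    rw [hs0]; split_ifs <;> norm_num
  have hsgn : ∀ t : ℝ, 0 ≤ t → s0 * a t j = |a t j| := by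
    intro t ht
    by_cases h : 0 < a 0 j
    · have hpos : 0 < a t j := by
        by_contra hle
        push_neg at hle
        have hlt : a t j < 0 := lt_of_le_of_ne hle (hane t ht)
        obtain ⟨r, hr, hr0⟩ := intermediate_value_Icc' ht ((hac j).continuousOn)
          (Set.mem_Icc.mpr ⟨hlt.le, h.le⟩)
        exact hane r hr.1 hr0
      rw [hs0, if_pos h, one_mul, abs_of_pos hpos]
    · have hneg0 : a 0 j < 0 := lt_of_le_of_ne (not_lt.mp h) (hbal j).2
      have hneg : a t j < 0 := by
        by_contra hle
        push_neg at hle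
        have hlt : 0 < a t j := lt_of_le_of_ne hle (Ne.symm (hane t ht))
        obtain ⟨r, hr, hr0⟩ := intermediate_value_Icc ht ((hac j).continuousOn)
          (Set.mem_Icc.mpr ⟨hneg0.le, hlt.le⟩)
        exact hane r hr.1 hr0
      rw [hs0, if_neg h, abs_of_neg hneg]
      ring
  -- the monotone functional u
  set gf : ℝ → ℝ := fun r => s0 * ∑ ic, w' r j ic * z ic with hgf
  have hgi : ∀ t : ℝ, IntervalIntegrable gf volume 0 t := by
    intro t
    have h1 : IntervalIntegrable (fun r => ∑ ic, w' r j ic * z ic) volume 0 t := by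
      have h2 := IntervalIntegrable.sum (μ := volume) (a := (0:ℝ)) (b := t) Finset.univ
        (f := fun (ic : Fin d) (r : ℝ) => w' r j ic * z ic)
        (fun ic _ => (hwInt j ic t).mul_const (z ic))
      have heq : (∑ ic : Fin d, fun r : ℝ => w' r j ic * z ic)
          = fun r => ∑ ic, w' r j ic * z ic := by
        funext r; simp
      rwa [heq] at h2
    exact h1.const_mul s0
  set u : ℝ → ℝ := fun t => s0 * dotp (w t j) z with hu
  have huFTC : ∀ t : ℝ, u t = u 0 + ∫ r in (0:ℝ)..t, gf r := by
    intro t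
    have h2 : (∫ r in (0:ℝ)..t, gf r) = s0 * ∑ ic, (∫ r in (0:ℝ)..t, w' r j ic) * z ic := by
      show (∫ r in (0:ℝ)..t, s0 * ∑ ic, w' r j ic * z ic) = _
      rw [intervalIntegral.integral_const_mul]
      congr 1
      rw [intervalIntegral.integral_finset_sum (fun ic _ => (hwInt j ic t).mul_const (z ic))]
      exact Finset.sum_congr rfl fun ic _ => intervalIntegral.integral_mul_const _ _
    have h1 : dotp (w t j) z = dotp (w 0 j) z + ∑ ic, (∫ r in (0:ℝ)..t, w' r j ic) * z ic := by
      unfold dotp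
      rw [← Finset.sum_add_distrib]
      exact Finset.sum_congr rfl fun ic _ => by rw [hwFTC t j ic]; ring
    show s0 * dotp (w t j) z = s0 * dotp (w 0 j) z + ∫ r in (0:ℝ)..t, gf r
    rw [h1, h2]
    ring
  have hmain : ∀ᵐ r ∂(volume : Measure ℝ), r ∈ Set.Ici (0:ℝ) →
      0 ≤ gf r ∧ c * |a' r j| ≤ gf r := by
    have hrnn : ∀ v : ℝ, 0 ≤ relu v := fun v => le_max_right v 0
    filter_upwards [hODE'] with r hσ hr
    obtain ⟨σ, hσ01, hσ0, hσ1, hw', ha'⟩ := hσ hr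
    have hstep : (∑ ic, w' r j ic * z ic)
        = a r j * ∑ i, (-(deriv ℓ (y i * net (w r) (a r) (x i)))) * (σ i j * m i) := by
      have e1 : ∀ ic, w' r j ic * z ic
          = ∑ i, -(deriv ℓ (y i * net (w r) (a r) (x i)) * y i * a r j * σ i j
              * (x i ic * z ic)) := by
        intro ic
        rw [hw' j ic, neg_mul, Finset.sum_mul, ← Finset.sum_neg_distrib]
        exact Finset.sum_congr rfl fun i _ => by ring
      rw [Finset.sum_congr rfl fun ic _ => e1 ic, Finset.sum_comm, Finset.mul_sum]
      refine Finset.sum_congr rfl fun i _ => ?_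
      have e2 : ∀ K : ℝ, (∑ ic, K * (x i ic * z ic)) = K * dotp (x i) z := by
        intro K
        rw [dotp, Finset.mul_sum]
      calc (∑ ic, -(deriv ℓ (y i * net (w r) (a r) (x i)) * y i * a r j * σ i j
              * (x i ic * z ic)))
          = ∑ ic, (-(deriv ℓ (y i * net (w r) (a r) (x i)) * y i * a r j * σ i j))
              * (x i ic * z ic) := Finset.sum_congr rfl fun ic _ => by ring
        _ = (-(deriv ℓ (y i * net (w r) (a r) (x i)) * y i * a r j * σ i j))
              * dotp (x i) z := e2 _
        _ = a r j * ((-(deriv ℓ (y i * net (w r) (a r) (x i)))) * (σ i j * m i)) := by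
              simp only [hm]
              ring
    have hgfeq : gf r
        = |a r j| * ∑ i, (-(deriv ℓ (y i * net (w r) (a r) (x i)))) * (σ i j * m i) := by
      show s0 * (∑ ic, w' r j ic * z ic) = _
      rw [hstep, ← hsgn r hr]
      ring
    have hterm : ∀ i, 0 ≤ (-(deriv ℓ (y i * net (w r) (a r) (x i)))) * (σ i j * m i) := by
      intro i
      exact mul_nonneg (neg_nonneg.mpr (hDle _))
        (mul_nonneg (hσ01 i j).1 (le_trans (hdotpos i).le (hmge i)))
    constructor
    · rw [hgfeq]
      exact mul_nonneg (abs_nonneg _) (Finset.sum_nonneg fun i _ => hterm i)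
    · have h1 : |a' r j|
          ≤ ∑ i, (-(deriv ℓ (y i * net (w r) (a r) (x i)))) * relu (dotp (w r j) (x i)) := by
        rw [ha' j, abs_neg]
        refine (Finset.abs_sum_le_sum_abs _ _).trans (Finset.sum_le_sum fun i _ => ?_)
        rw [abs_mul, abs_mul, hyabs i, mul_one, abs_of_nonpos (hDle _), abs_of_nonneg (hrnn _)]
      have hreluσ : ∀ i, relu (dotp (w r j) (x i)) ≤ σ i j * (X i * |a r j|) := by
        intro i
        rcases lt_trichotomy (dotp (w r j) (x i)) 0 with h | h | h
        · rw [relu, max_eq_right h.le]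
          exact mul_nonneg (hσ01 i j).1 (mul_nonneg (hXpos i).le (abs_nonneg _))
        · rw [h, relu, max_self]
          exact mul_nonneg (hσ01 i j).1 (mul_nonneg (hXpos i).le (abs_nonneg _))
        · rw [hσ1 i j h, one_mul]
          exact hrelu_le r hr i
      calc c * |a' r j|
          ≤ c * ∑ i, (-(deriv ℓ (y i * net (w r) (a r) (x i)))) * relu (dotp (w r j) (x i)) :=
            mul_le_mul_of_nonneg_left h1 hcpos.le
        _ = ∑ i, c * ((-(deriv ℓ (y i * net (w r) (a r) (x i))))
              * relu (dotp (w r j) (x i))) := Finset.mul_sum _ _ _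
        _ ≤ ∑ i, (-(deriv ℓ (y i * net (w r) (a r) (x i)))) * (σ i j * m i) * |a r j| := by
            refine Finset.sum_le_sum fun i _ => ?_
            have hDn : 0 ≤ -(deriv ℓ (y i * net (w r) (a r) (x i))) := neg_nonneg.mpr (hDle _)
            calc c * ((-(deriv ℓ (y i * net (w r) (a r) (x i)))) * relu (dotp (w r j) (x i)))
                ≤ c * ((-(deriv ℓ (y i * net (w r) (a r) (x i)))) * (σ i j * (X i * |a r j|))) :=
                  mul_le_mul_of_nonneg_left
                    (mul_le_mul_of_nonneg_left (hreluσ i) hDn) hcpos.le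
              _ = ((-(deriv ℓ (y i * net (w r) (a r) (x i)))) * σ i j * |a r j|) * (c * X i) := by
                  ring
              _ ≤ ((-(deriv ℓ (y i * net (w r) (a r) (x i)))) * σ i j * |a r j|) * m i := by
                  refine mul_le_mul_of_nonneg_left (hmX i) ?_
                  exact mul_nonneg (mul_nonneg hDn (hσ01 i j).1) (abs_nonneg _)
              _ = (-(deriv ℓ (y i * net (w r) (a r) (x i)))) * (σ i j * m i) * |a r j| := by
                  ring
        _ = |a r j| * ∑ i, (-(deriv ℓ (y i * net (w r) (a r) (x i)))) * (σ i j * m i) := by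
            rw [Finset.mul_sum]
            exact Finset.sum_congr rfl fun i _ => by ring
        _ = gf r := hgfeq.symm
  have humono : ∀ t1 t2 : ℝ, 0 ≤ t1 → t1 ≤ t2 → u t1 ≤ u t2 := by
    intro t1 t2 h1 h2
    have h3 : u t2 - u t1 = ∫ r in t1..t2, gf r := by
      rw [huFTC t1, huFTC t2]
      have := intervalIntegral.integral_interval_sub_left (hgi t2) (hgi t1)
      linarith
    have h4 : 0 ≤ ∫ r in t1..t2, gf r := by
      refine intervalIntegral.integral_nonneg_of_ae_restrict h2 ?_
      refine (ae_restrict_iff' measurableSet_Icc).mpr ?_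
      filter_upwards [hmain] with r h hmem
      exact (h (h1.trans hmem.1)).1
    linarith
  have hbd : ∀ t : ℝ, 0 ≤ t → c * |a t j - a 0 j| ≤ u t - u 0 := by
    intro t ht
    have h1 : a t j - a 0 j = ∫ r in (0:ℝ)..t, a' r j := by
      rw [haFTC t j]; ring
    have h2 : |a t j - a 0 j| ≤ ∫ r in (0:ℝ)..t, |a' r j| := by
      rw [h1]; exact intervalIntegral.abs_integral_le_integral_abs ht
    have h3 : (∫ r in (0:ℝ)..t, c * |a' r j|) ≤ ∫ r in (0:ℝ)..t, gf r := by
      refine intervalIntegral.integral_mono_ae_restrict ht (((haInt j t).abs).const_mul c) (hgi t) ?_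
      refine (ae_restrict_iff' measurableSet_Icc).mpr ?_
      filter_upwards [hmain] with r h hmem
      exact (h hmem.1).2
    calc c * |a t j - a 0 j| ≤ c * ∫ r in (0:ℝ)..t, |a' r j| :=
          mul_le_mul_of_nonneg_left h2 hcpos.le
      _ = ∫ r in (0:ℝ)..t, c * |a' r j| := (intervalIntegral.integral_const_mul _ _).symm
      _ ≤ ∫ r in (0:ℝ)..t, gf r := h3
      _ = u t - u 0 := by rw [huFTC t]; ring
  by_cases hB : ∃ U : ℝ, ∀ t : ℝ, 0 ≤ t → u t ≤ U
  · left
    obtain ⟨U, hU⟩ := hB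
    refine ⟨|a 0 j| + (U - u 0) / c, fun t ht => ?_⟩
    have h1 := hbd t ht
    have h2 := hU t ht
    have h3 : |a t j| ≤ |a 0 j| + |a t j - a 0 j| := by
      have : a t j = a 0 j + (a t j - a 0 j) := by ring
      calc |a t j| = |a 0 j + (a t j - a 0 j)| := by rw [← this]
        _ ≤ |a 0 j| + |a t j - a 0 j| := abs_add_le _ _
    have h4 : |a t j - a 0 j| ≤ (U - u 0) / c := by
      rw [le_div_iff₀ hcpos]
      calc |a t j - a 0 j| * c = c * |a t j - a 0 j| := by ring
        _ ≤ u t - u 0 := h1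
        _ ≤ U - u 0 := by linarith
    linarith
  · right
    push_neg at hB
    have hz0 : 0 < norm2 z := by
      have h1 : dotp (x i0) (x i0) ≤ m i0 := hmge i0
      have h2 : m i0 ≤ X i0 * norm2 z := by
        rw [hm]
        calc y i0 * dotp (x i0) z ≤ |y i0 * dotp (x i0) z| := le_abs_self _
          _ = |dotp (x i0) z| := by rw [abs_mul, hyabs i0, one_mul]
          _ ≤ norm2 (x i0) * norm2 z := abs_dotp_le' _ _
          _ = X i0 * norm2 z := by rw [hX]
      nlinarith [hdotpos i0, hXpos i0, norm2_nonneg' z]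
    have huinf : Tendsto u atTop atTop := by
      refine tendsto_atTop.mpr fun b => ?_
      obtain ⟨t0, ht0, hbt⟩ := hB b
      refine Filter.eventually_atTop.mpr ⟨t0, fun t ht => ?_⟩
      exact hbt.le.trans (humono t0 t ht0 ht)
    have hcomp : ∀ᶠ t in atTop, u t / norm2 z ≤ |a t j| := by
      refine Filter.eventually_atTop.mpr ⟨0, fun t ht => ?_⟩
      rw [div_le_iff₀ hz0]
      calc u t = s0 * dotp (w t j) z := by rw [hu]
        _ ≤ |s0 * dotp (w t j) z| := le_abs_self _
        _ = |dotp (w t j) z| := by rw [abs_mul, hs0abs, one_mul]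
        _ ≤ norm2 (w t j) * norm2 z := abs_dotp_le' _ _
        _ = |a t j| * norm2 z := by rw [hnormw t ht]
    exact tendsto_atTop_mono' atTop hcomp (huinf.atTop_div_const hz0)
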